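/- arXiv:2307.01092 — 2 statements merged into one kernel-verified Lean document; each statement's English description precedes it below -/
import Mathlib

section
/- Let δ ∈ [0.167, 0.169] be a real root of f_δ, and let q = (q₁, q₂) ∈ ℝ² satisfy dist(q, (0,1)) = 1/2, q₂ < 1, q₁ ∈ [0.38, 0.39], and f_{q^x}(q₁) = 0. Then the polygonal path with consecutive vertices p_s = (1/2, 0), p_δ = (1/2, δ), q, p_t = (1, 1/2 + δ) covers the unit square S₀ = [0,1]² with radius 1/2, i.e., every point of S₀ is within distance 1/2 of the union of the three segments [p_s,p_δ] ∪ [p_δ,q] ∪ [q,p_t]. -/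
open Set

/-- The Euclidean plane. -/
abbrev E2 := EuclideanSpace ℝ (Fin 2)

/-- The point (x, y) in the Euclidean plane. -/
noncomputable def pt (x y : ℝ) : E2 := !₂[x, y]

/-- The axis-aligned rectangle [a,b] × [c,d]. -/
def rect (a b c d : ℝ) : Set E2 := {p | p 0 ∈ Icc a b ∧ p 1 ∈ Icc c d}

open Polynomial in
/-- The degree-16 integer polynomial `f_δ` whose root in [0.167, 0.169] is the
optimal value of δ. -/
noncomputable def fdelta : Polynomial ℤ :=
  589824 * X ^ 16 - 7077888 * X ^ 15 + 41189376 * X ^ 14 - 154386432 * X ^ 13 +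
    416788480 * X ^ 12 - 857112576 * X ^ 11 + 1383417856 * X ^ 10 - 1779354624 * X ^ 9 +
    1834437632 * X ^ 8 - 1514108928 * X ^ 7 + 992782336 * X ^ 6 - 509312064 * X ^ 5 +
    199354208 * X ^ 4 - 57160752 * X ^ 3 + 11200088 * X ^ 2 - 1313928 * X + 67417

open Polynomial in
/-- The degree-16 integer polynomial `f_{q^x}` vanishing at the x-coordinate of the
optimal touching point `q`. -/
noncomputable def fqx : Polynomial ℤ :=
  16777216 * X ^ 16 - 29360128 * X ^ 14 + 21757952 * X ^ 12 - 8978432 * X ^ 10 +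
    196608 * X ^ 9 + 2187264 * X ^ 8 - 208896 * X ^ 7 - 233472 * X ^ 6 + 38400 * X ^ 5 -
    2432 * X ^ 4 + 2304 * X ^ 3 + 1008 * X ^ 2 - 648 * X + 81

lemma comb_apply (a b : E2) (t : ℝ) (i : Fin 2) :
    ((1-t) • a + t • b) i = (1-t) * a i + t * b i := rfl

lemma mem_seg (a b : E2) {t : ℝ} (h0 : 0 ≤ t) (h1 : t ≤ 1) :
    (1-t) • a + t • b ∈ segment ℝ a b :=
  ⟨1-t, t, by linarith, h0, by ring, rfl⟩

lemma dist_le_half (p w : E2) (h : (p 0 - w 0)^2 + (p 1 - w 1)^2 ≤ 1/4) :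
    dist p w ≤ 1/2 := by
  rw [EuclideanSpace.dist_eq]
  have e : ∑ i, dist (p i) (w i) ^ 2 = (p 0 - w 0)^2 + (p 1 - w 1)^2 := by
    simp [Fin.sum_univ_two, Real.dist_eq, sq_abs]
  rw [e]
  calc Real.sqrt ((p 0 - w 0)^2 + (p 1 - w 1)^2) ≤ Real.sqrt (1/4) := Real.sqrt_le_sqrt h
    _ = 1/2 := by rw [show (1/4:ℝ) = (1/2)^2 by norm_num, Real.sqrt_sq (by norm_num)]

set_option maxHeartbeats 2000000 in
/-- For `δ ∈ [0.167, 0.169]` a root of `f_δ` and `q` on the circle of radius 1/2 around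
`(0,1)` with `q₂ < 1`, `q₁ ∈ [0.38, 0.39]` and `f_{q^x}(q₁) = 0`, the polygonal path
`p_s = (1/2,0) → p_δ = (1/2,δ) → q → p_t = (1, 1/2+δ)` covers the unit square
`S₀ = [0,1]²` with radius 1/2. -/
theorem optimal_polygonal_path_covers_unit_square (δ : ℝ)
    (hδmem : δ ∈ Icc (0.167 : ℝ) 0.169) (hδroot : Polynomial.aeval δ fdelta = 0)
    (q : E2) (hq : dist q (pt 0 1) = 1 / 2) (hqy : q 1 < 1)
    (hqx : q 0 ∈ Icc (0.38 : ℝ) 0.39) (hqxroot : Polynomial.aeval (q 0) fqx = 0) :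
    ∀ p ∈ rect 0 1 0 1,
      ∃ x ∈ segment ℝ (pt (1 / 2) 0) (pt (1 / 2) δ) ∪
          segment ℝ (pt (1 / 2) δ) q ∪ segment ℝ q (pt 1 (1 / 2 + δ)),
        dist p x ≤ 1 / 2 := by
  obtain ⟨hδ1, hδ2⟩ := hδmem
  obtain ⟨ha1, ha2⟩ := hqx
  rintro p ⟨⟨hx0, hx1⟩, hy0, hy1⟩
  have hqq : (q 0)^2 + (q 1 - 1)^2 = 1/4 := by
    have h := hq
    rw [EuclideanSpace.dist_eq] at h
    have hs : ∑ i, dist (q i) (pt 0 1 i) ^ 2 = (q 0)^2 + (q 1 - 1)^2 := by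
      have e0 : pt 0 1 0 = 0 := rfl
      have e1 : pt 0 1 1 = 1 := rfl
      rw [Fin.sum_univ_two, e0, e1, Real.dist_eq, Real.dist_eq, sq_abs, sq_abs, sub_zero]
    rw [hs] at h
    have hnn : (0:ℝ) ≤ (q 0)^2 + (q 1 - 1)^2 := by positivity
    nlinarith [Real.sq_sqrt hnn, h]
  clear hq
  set x := p 0 with hxdef
  set y := p 1 with hydef
  set a := q 0 with hadef
  set b := q 1 with hbdef
  clear_value x y a b
  have hb1 : (0.675 : ℝ) ≤ b := by nlinarith [sq_nonneg (a - 0.38), sq_nonneg (1 - b - 0.326)]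
  have hb2 : b ≤ (0.688 : ℝ) := by nlinarith [sq_nonneg (a - 0.39), sq_nonneg (1 - b - 0.312), ha1]
  rcases le_or_gt y δ with hc1 | hc1
  · -- Case 1 : vertical segment
    have hδpos : (0:ℝ) < δ := by linarith
    obtain ⟨t, ht0, ht1, ht⟩ : ∃ t : ℝ, 0 ≤ t ∧ t ≤ 1 ∧ t * δ = y :=
      ⟨y/δ, by positivity, (div_le_one hδpos).2 hc1, div_mul_cancel₀ _ (ne_of_gt hδpos)⟩
    refine ⟨(1 - t) • pt (1/2) 0 + t • pt (1/2) δ,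
      Or.inl (Or.inl (mem_seg _ _ ht0 ht1)), dist_le_half _ _ ?_⟩
    simp only [comb_apply, ← hxdef, ← hydef, ← hadef, ← hbdef]
    have e0 : pt (1/2) 0 0 = 1/2 := rfl
    have e1 : pt (1/2) 0 1 = 0 := rfl
    have e2 : pt (1/2) δ 0 = 1/2 := rfl
    have e3 : pt (1/2) δ 1 = δ := rfl
    rw [e0, e1, e2, e3]
    have h2 : y - ((1-t) * 0 + t * δ) = 0 := by rw [ht]; ring
    rw [h2]
    have hsq : (x - ((1-t) * (1/2) + t * (1/2)))^2 ≤ (1/2:ℝ)^2 :=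
      sq_le_sq' (by linarith) (by linarith)
    norm_num at hsq ⊢
    linarith [hsq]
  · rcases le_or_gt y b with hc2 | hc2
    · -- Case 2 : y ∈ (δ, b]
      have hbd : (0:ℝ) < b - δ := by linarith
      obtain ⟨t, ht0, ht1, ht⟩ : ∃ t : ℝ, 0 ≤ t ∧ t ≤ 1 ∧ t * (b - δ) = y - δ :=
        ⟨(y-δ)/(b-δ), div_nonneg (by linarith) (le_of_lt hbd),
         (div_le_one hbd).2 (by linarith), div_mul_cancel₀ _ (ne_of_gt hbd)⟩
      have hta : 0 ≤ t * (1/2 - a) := mul_nonneg ht0 (by linarith)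
      rcases le_or_gt x ((1-t) * (1/2) + t * a + 1/2) with hc3 | hc3
      · -- 2a : middle segment
        refine ⟨(1-t) • pt (1/2) δ + t • q,
          Or.inl (Or.inr (mem_seg _ _ ht0 ht1)), dist_le_half _ _ ?_⟩
        simp only [comb_apply, ← hxdef, ← hydef, ← hadef, ← hbdef]
        have e2 : pt (1/2) δ 0 = 1/2 := rfl
        have e3 : pt (1/2) δ 1 = δ := rfl
        rw [e2, e3]
        have h2 : y - ((1-t) * δ + t * b) = 0 := by linear_combination -ht
        rw [h2]
        have hsq : (x - ((1-t) * (1/2) + t * a))^2 ≤ (1/2:ℝ)^2 :=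
          sq_le_sq' (by linarith) (by linarith)
        norm_num at hsq ⊢
        linarith [hsq]
      · -- 2b : last segment, x large
        have hxa : a ≤ x := by linarith [mul_nonneg (by linarith : (0:ℝ) ≤ 1 - t) (by linarith : (0:ℝ) ≤ 1/2 - a)]
        obtain ⟨s, hs0, hs1, hs⟩ : ∃ s : ℝ, 0 ≤ s ∧ s ≤ 1 ∧ s * (1 - a) = x - a :=
          ⟨(x-a)/(1-a), div_nonneg (by linarith) (by linarith),
           (div_le_one (by linarith)).2 (by linarith), div_mul_cancel₀ _ (by linarith)⟩
        refine ⟨(1-s) • q + s • pt 1 (1/2 + δ),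
          Or.inr (mem_seg _ _ hs0 hs1), dist_le_half _ _ ?_⟩
        simp only [comb_apply, ← hxdef, ← hydef, ← hadef, ← hbdef]
        have e4 : pt 1 (1/2 + δ) 0 = 1 := rfl
        have e5 : pt 1 (1/2 + δ) 1 = 1/2 + δ := rfl
        rw [e4, e5]
        have h1 : x - ((1-s) * a + s * 1) = 0 := by linear_combination -hs
        rw [h1]
        have hB : (0:ℝ) ≤ b - 1/2 - δ := by linarith
        have hkey : s * (1 - a) ≥ (1 - a) - t * (1/2 - a) := by linarith [hs]
        have hupper : y - ((1-s) * b + s * (1/2 + δ)) ≤ 1/2 := by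
          linarith [mul_nonneg hs0 hB, mul_nonneg (by linarith : (0:ℝ) ≤ 1 - s) hB]
        have hlower : ((1-s) * b + s * (1/2 + δ)) - y ≤ 1/2 := by
          have hprod1 : (s * (1 - a) - ((1 - a) - t * (1/2 - a))) * (b - 1/2 - δ) ≥ 0 :=
            mul_nonneg (by linarith) hB
          have hbr : (0:ℝ) ≤ (1 - a) * (b - δ) - (1/2 - a) * (b - 1/2 - δ) := by
            linarith [mul_nonneg (by linarith : (0:ℝ) ≤ 1 - a - 0.61) (by linarith : (0:ℝ) ≤ b - δ - 0.5),
              mul_nonneg (by linarith : (0:ℝ) ≤ a - 0.38) hB]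
          have hprod2 : t * ((1 - a) * (b - δ) - (1/2 - a) * (b - 1/2 - δ)) ≥ 0 :=
            mul_nonneg ht0 hbr
          have ht' : (1 - a) * (t * (b - δ)) = (1 - a) * (y - δ) := by rw [ht]
          have H : (1 - a) * (((1-s) * b + s * (1/2 + δ)) - y - 1/2) ≤ 0 := by
            linarith [hprod1, hprod2, ht']
          by_contra hcon
          push_neg at hcon
          have hpos : 0 < (1 - a) * (((1-s) * b + s * (1/2 + δ)) - y - 1/2) :=
            mul_pos (by linarith) (by linarith)
          linarith
        have hsq : (y - ((1-s) * b + s * (1/2 + δ)))^2 ≤ (1/2:ℝ)^2 :=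
          sq_le_sq' (by linarith) (by linarith)
        norm_num at hsq ⊢
        linarith [hsq]
    · -- Case 3 : y > b
      rcases le_or_gt x 0.76 with hc3 | hc3
      · -- 3a : disk around q
        refine ⟨q, Or.inr (left_mem_segment ℝ q (pt 1 (1/2 + δ))), dist_le_half _ _ ?_⟩
        simp only [← hxdef, ← hydef, ← hadef, ← hbdef]
        have h1 : (x - a)^2 ≤ a^2 := sq_le_sq' (by linarith) (by linarith)
        have h2 : (y - b)^2 ≤ (1 - b)^2 := sq_le_sq' (by linarith) (by linarith)
        have h3 : a^2 + (1 - b)^2 = 1/4 := by linear_combination hqq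
        linarith [h1, h2, h3]
      · -- 3b : last segment
        obtain ⟨s, hs0, hs1, hs⟩ : ∃ s : ℝ, 0 ≤ s ∧ s ≤ 1 ∧ s * (1 - a) = x - a :=
          ⟨(x-a)/(1-a), div_nonneg (by linarith) (by linarith),
           (div_le_one (by linarith)).2 (by linarith), div_mul_cancel₀ _ (by linarith)⟩
        refine ⟨(1-s) • q + s • pt 1 (1/2 + δ),
          Or.inr (mem_seg _ _ hs0 hs1), dist_le_half _ _ ?_⟩
        simp only [comb_apply, ← hxdef, ← hydef, ← hadef, ← hbdef]
        have e4 : pt 1 (1/2 + δ) 0 = 1 := rfl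
        have e5 : pt 1 (1/2 + δ) 1 = 1/2 + δ := rfl
        rw [e4, e5]
        have h1 : x - ((1-s) * a + s * 1) = 0 := by linear_combination -hs
        rw [h1]
        have hB : (0:ℝ) ≤ b - 1/2 - δ := by linarith
        have hwlo : 1/2 + δ ≤ (1-s) * b + s * (1/2 + δ) := by
          linarith [mul_nonneg (by linarith : (0:ℝ) ≤ 1 - s) hB]
        have hwhi : (1-s) * b + s * (1/2 + δ) ≤ b := by
          linarith [mul_nonneg hs0 hB]
        have hsq : (y - ((1-s) * b + s * (1/2 + δ)))^2 ≤ (1/2:ℝ)^2 :=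
          sq_le_sq' (by linarith) (by linarith)
        norm_num at hsq ⊢
        linarith [hsq]
end

section
/- The minimum value L_{S₀} = min_{δ ∈ [0,1]} F(δ) satisfies 1.3088 < L_{S₀} < 1.3089 (the length of the uniquely-shaped optimal lawn mowing path between two adjacent sides of the unit square is approximately 1.308838224). -/
open Set

/-- `F δ = δ + min_{q ∈ U} (dist ((1/2, δ)) q + dist q ((1, 1/2 + δ)))`, where `U` is the
circle of radius 1/2 centered at (0,1). (The infimum is attained since `U` is compact.) -/
noncomputable def F (δ : ℝ) : ℝ :=
  δ + sInf ((fun q : E2 => dist (pt (1 / 2) δ) q + dist q (pt 1 (1 / 2 + δ))) ''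
      {q : E2 | dist q (pt 0 1) = 1 / 2})

lemma cs' (a b x y s : ℝ) (hs : 0 ≤ s) (h : a^2 + b^2 ≤ s^2) :
    a*x + b*y ≤ s * Real.sqrt (x^2 + y^2) := by
  have h0 : (0:ℝ) ≤ x^2 + y^2 := by positivity
  have hs2 := Real.sq_sqrt h0
  have hn := Real.sqrt_nonneg (x^2 + y^2)
  nlinarith [sq_nonneg (a*y - b*x), sq_nonneg (s * Real.sqrt (x^2+y^2) - a*x - b*y),
    sq_nonneg (s * Real.sqrt (x^2+y^2) + a*x + b*y), mul_nonneg hs hn]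

lemma dist_eq' (p : E2) (q : E2) : dist p q = Real.sqrt ((p 0 - q 0)^2 + (p 1 - q 1)^2) := by
  simp [EuclideanSpace.dist_eq, Fin.sum_univ_two, Real.dist_eq, sq_abs]

lemma pt_apply0 (x y : ℝ) : pt x y 0 = x := rfl
lemma pt_apply1 (x y : ℝ) : pt x y 1 = y := rfl

/-- Key pointwise lower bound. -/
lemma key_lb (δ : ℝ) (hδ : 0 ≤ δ) (q : E2) (hq : dist q (pt 0 1) = 1/2) :
    (327207/250000 : ℝ) ≤ δ + (dist (pt (1/2) δ) q + dist q (pt 1 (1/2 + δ))) := by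
  simp only [dist_eq'] at hq ⊢
  simp only [pt_apply0, pt_apply1] at hq ⊢
  have h1 : (216046/1000000 : ℝ) * (1/2 - q 0) + (-976370/1000000) * (δ - q 1)
      ≤ 1 * Real.sqrt ((1/2 - q 0)^2 + (δ - q 1)^2) :=
    cs' _ _ _ _ _ (by norm_num) (by norm_num)
  have h2 : (-999717/1000000 : ℝ) * (q 0 - 1) + (23630/1000000) * (q 1 - (1/2 + δ))
      ≤ 1 * Real.sqrt ((q 0 - 1)^2 + (q 1 - (1/2 + δ))^2) :=
    cs' _ _ _ _ _ (by norm_num) (by norm_num)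
  have h3 : (1215763/1000000 : ℝ) * (q 0 - 0) + (-1) * (q 1 - 1)
      ≤ (787097/500000) * Real.sqrt ((q 0 - 0)^2 + (q 1 - 1)^2) :=
    cs' _ _ _ _ _ (by norm_num) (by norm_num)
  rw [hq] at h3
  linarith

lemma U_mem_half : dist (pt (1/2) 1) (pt 0 1) = 1/2 := by
  rw [dist_eq', pt_apply0, pt_apply1, pt_apply0, pt_apply1]
  rw [show ((1:ℝ)/2 - 0)^2 + (1 - 1)^2 = (1/2)^2 by norm_num, Real.sqrt_sq (by norm_num)]

lemma U_nonempty : {q : E2 | dist q (pt 0 1) = 1/2}.Nonempty := ⟨pt (1/2) 1, U_mem_half⟩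

lemma F_lb (δ : ℝ) (hδ : δ ∈ Icc (0:ℝ) 1) : (327207/250000 : ℝ) ≤ F δ := by
  have h : (327207/250000 : ℝ) - δ ≤ sInf ((fun q : E2 =>
      dist (pt (1 / 2) δ) q + dist q (pt 1 (1 / 2 + δ))) '' {q : E2 | dist q (pt 0 1) = 1 / 2}) := by
    apply le_csInf (U_nonempty.image _)
    rintro _ ⟨q, hq, rfl⟩
    have := key_lb δ hδ.1 q hq
    simp only []
    linarith
  rw [F]; linarith

/-- The minimum value `L_{S₀} = min_{δ ∈ [0,1]} F δ` (the length of the optimal lawn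
mowing path between two adjacent sides of the unit square, ≈ 1.308838224) satisfies
`1.3088 < L_{S₀} < 1.3089`. -/
theorem optimal_path_length_bounds :
    1.3088 < sInf (F '' Icc 0 1) ∧ sInf (F '' Icc 0 1) < 1.3089 := by
  have hne : (F '' Icc 0 1).Nonempty := ⟨F 0, mem_image_of_mem F (by norm_num)⟩
  have hbdd : BddBelow (F '' Icc 0 1) := by
    refine ⟨327207/250000, ?_⟩
    rintro _ ⟨δ, hδ, rfl⟩
    exact F_lb δ hδ
  constructor
  · have h := le_csInf hne (fun b hb => by
      obtain ⟨δ, hδ, rfl⟩ := hb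
      exact F_lb δ hδ)
    calc (1.3088:ℝ) < 327207/250000 := by norm_num
      _ ≤ _ := h
  · -- upper bound: use δ₀ = 1679/10000, q₀ = (217959/564082, 192541/282041)
    set δ₀ : ℝ := 1679/10000 with hδ₀
    have hmem : F δ₀ ∈ F '' Icc 0 1 := mem_image_of_mem F (by constructor <;> norm_num)
    have h1 : sInf (F '' Icc 0 1) ≤ F δ₀ := csInf_le hbdd hmem
    have hq0 : dist (pt (217959/564082) (192541/282041)) (pt 0 1) = 1/2 := by
      rw [dist_eq', pt_apply0, pt_apply1, pt_apply0, pt_apply1]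
      rw [show ((217959:ℝ)/564082 - 0)^2 + (192541/282041 - 1)^2 = (1/2)^2 by norm_num,
        Real.sqrt_sq (by norm_num)]
    have hFd : F δ₀ < 1.3089 := by
      have hle : sInf ((fun q : E2 => dist (pt (1 / 2) δ₀) q + dist q (pt 1 (1 / 2 + δ₀))) ''
          {q : E2 | dist q (pt 0 1) = 1 / 2})
          ≤ dist (pt (1/2) δ₀) (pt (217959/564082) (192541/282041)) +
            dist (pt (217959/564082) (192541/282041)) (pt 1 (1/2 + δ₀)) := by
        apply csInf_le
        · exact ⟨0, by rintro _ ⟨q, hq, rfl⟩; positivity⟩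
        · exact ⟨_, hq0, rfl⟩
      have hd1 : dist (pt (1/2) δ₀) (pt (217959/564082) (192541/282041)) ≤ 527159/1000000 := by
        rw [dist_eq', pt_apply0, pt_apply1, pt_apply0, pt_apply1]
        rw [show (527159/1000000 : ℝ) = Real.sqrt ((527159/1000000)^2) from
          (Real.sqrt_sq (by norm_num)).symm]
        apply Real.sqrt_le_sqrt
        rw [hδ₀]; norm_num
      have hd2 : dist (pt (217959/564082) (192541/282041)) (pt 1 (1/2 + δ₀)) ≤ 76723/125000 := by
        rw [dist_eq', pt_apply0, pt_apply1, pt_apply0, pt_apply1]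
        rw [show (76723/125000 : ℝ) = Real.sqrt ((76723/125000)^2) from
          (Real.sqrt_sq (by norm_num)).symm]
        apply Real.sqrt_le_sqrt
        rw [hδ₀]; norm_num
      have : F δ₀ ≤ δ₀ + (527159/1000000 + 76723/125000) := by
        rw [F]; linarith
      rw [hδ₀] at this; norm_num at this ⊢; linarith
    linarith
end
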